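/- arXiv:2604.23847 — 4 statements merged into one kernel-verified Lean document; each statement's English description precedes it below -/
import Mathlib

section
/- Let H be a real inner product space and g₁,…,g_K ∈ H with K ≥ 2. Suppose a := min_{i≠j} ‖gᵢ - gⱼ‖ and b := max_{i≠j} |‖gᵢ‖ - ‖gⱼ‖|. Then for any weights π ∈ Δ_{K-1} on the probability simplex, setting L := Σ_k π_k ‖g_k‖, we have ‖Σ_k π_k g_k‖² ≤ L² - ((a² - b²)/2) · Σ_k π_k(1 - π_k). -/
theorem stmt1 {H : Type*} [NormedAddCommGroup H] [InnerProductSpace ℝ H]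
    {K : ℕ} (hK : 2 ≤ K) (g : Fin K → H)
    (hne : (Finset.univ.filter fun p : Fin K × Fin K => p.1 ≠ p.2).Nonempty)
    (a b : ℝ)
    (ha : a = (Finset.univ.filter fun p : Fin K × Fin K => p.1 ≠ p.2).inf' hne
        fun p => ‖g p.1 - g p.2‖)
    (hb : b = (Finset.univ.filter fun p : Fin K × Fin K => p.1 ≠ p.2).sup' hne
        fun p => |‖g p.1‖ - ‖g p.2‖|)
    (π : Fin K → ℝ) (hπ0 : ∀ k, 0 ≤ π k) (hπ1 : ∑ k, π k = 1)
    (L : ℝ) (hL : L = ∑ k, π k * ‖g k‖) :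
    ‖∑ k, π k • g k‖ ^ 2 ≤ L ^ 2 - ((a ^ 2 - b ^ 2) / 2) * ∑ k, π k * (1 - π k) := by
  classical
  set s := Finset.univ.filter fun p : Fin K × Fin K => p.1 ≠ p.2 with hs
  set c := (a ^ 2 - b ^ 2) / 2 with hc
  have ha0 : 0 ≤ a := by
    rw [ha]; exact Finset.le_inf' hne _ fun p _ => norm_nonneg _
  have hpoint : ∀ p ∈ s, c ≤ ‖g p.1‖ * ‖g p.2‖ - (inner ℝ (g p.1) (g p.2) : ℝ) := by
    intro p hp
    have h1 : a ≤ ‖g p.1 - g p.2‖ := ha ▸ Finset.inf'_le _ hp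
    have h2 : |‖g p.1‖ - ‖g p.2‖| ≤ b :=
      hb ▸ Finset.le_sup' (fun p : Fin K × Fin K => |‖g p.1‖ - ‖g p.2‖|) hp
    have h3 : a ^ 2 ≤ ‖g p.1 - g p.2‖ ^ 2 := pow_le_pow_left₀ ha0 h1 2
    have h4 : (‖g p.1‖ - ‖g p.2‖) ^ 2 ≤ b ^ 2 := by
      rw [← sq_abs]; exact pow_le_pow_left₀ (abs_nonneg _) h2 2
    have e1 : ‖g p.1 - g p.2‖ ^ 2
        = ‖g p.1‖ ^ 2 - 2 * (inner ℝ (g p.1) (g p.2) : ℝ) + ‖g p.2‖ ^ 2 := by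
      rw [norm_sub_sq_real]
    nlinarith [h3, h4, e1]
  have key : ∑ p ∈ s, (π p.1 * π p.2) * c
      ≤ ∑ p ∈ s, (π p.1 * π p.2) * (‖g p.1‖ * ‖g p.2‖ - (inner ℝ (g p.1) (g p.2) : ℝ)) :=
    Finset.sum_le_sum fun p hp =>
      mul_le_mul_of_nonneg_left (hpoint p hp) (mul_nonneg (hπ0 _) (hπ0 _))
  have hnorm : ‖∑ k, π k • g k‖ ^ 2
      = ∑ p : Fin K × Fin K, π p.1 * π p.2 * (inner ℝ (g p.1) (g p.2) : ℝ) := by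
    rw [← real_inner_self_eq_norm_sq, Fintype.sum_prod_type, sum_inner]
    simp only [inner_sum, real_inner_smul_left, real_inner_smul_right]
    exact Finset.sum_congr rfl fun i _ => Finset.sum_congr rfl fun j _ => by ring
  have hL2 : L ^ 2 = ∑ p : Fin K × Fin K, π p.1 * π p.2 * (‖g p.1‖ * ‖g p.2‖) := by
    rw [hL, sq, Finset.sum_mul_sum, Fintype.sum_prod_type]
    exact Finset.sum_congr rfl fun i _ => Finset.sum_congr rfl fun j _ => by ring
  have hF : ∑ p ∈ s, (π p.1 * π p.2) * (‖g p.1‖ * ‖g p.2‖ - (inner ℝ (g p.1) (g p.2) : ℝ))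
      = ∑ p : Fin K × Fin K, (π p.1 * π p.2) * (‖g p.1‖ * ‖g p.2‖ - (inner ℝ (g p.1) (g p.2) : ℝ)) := by
    rw [hs]
    refine Finset.sum_filter_of_ne fun p _ h0 => ?_
    intro hpe
    apply h0
    rw [show p.2 = p.1 from hpe.symm, real_inner_self_eq_norm_mul_norm]
    ring
  have hpsum : ∑ p ∈ s, π p.1 * π p.2 = ∑ k, π k * (1 - π k) := by
    have h1 : ∑ p : Fin K × Fin K, π p.1 * π p.2 = 1 := by
      rw [Fintype.sum_prod_type, ← Finset.sum_mul_sum, hπ1]; ring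
    have h2 : ∑ p ∈ Finset.univ.filter (fun p : Fin K × Fin K => ¬ p.1 ≠ p.2), π p.1 * π p.2
        = ∑ k, π k * π k := by
      refine Finset.sum_nbij' (fun p => p.1) (fun k => (k, k)) ?_ ?_ ?_ ?_ ?_
      · intro p hp; simp
      · intro k hk; simp
      · intro p hp
        simp only [Finset.mem_filter, not_not] at hp
        exact Prod.ext rfl hp.2
      · intro k hk; rfl
      · intro p hp
        simp only [Finset.mem_filter, not_not] at hp
        rw [← hp.2]
    have h3 := Finset.sum_filter_add_sum_filter_not Finset.univ
      (fun p : Fin K × Fin K => p.1 ≠ p.2) (fun p => π p.1 * π p.2)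
    have h4 : ∑ k, π k * (1 - π k) = 1 - ∑ k, π k * π k := by
      simp only [mul_one_sub]
      rw [Finset.sum_sub_distrib, hπ1]
    rw [h4]
    rw [h1, h2] at h3
    linarith [h3]
  have hfin : ∑ p ∈ s, (π p.1 * π p.2) * c = c * ∑ k, π k * (1 - π k) := by
    rw [← Finset.sum_mul, hpsum]; ring
  have hsub : ∑ p : Fin K × Fin K, (π p.1 * π p.2) * (‖g p.1‖ * ‖g p.2‖ - (inner ℝ (g p.1) (g p.2) : ℝ))
      = L ^ 2 - ‖∑ k, π k • g k‖ ^ 2 := by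
    rw [hL2, hnorm, ← Finset.sum_sub_distrib]
    exact Finset.sum_congr rfl fun p _ => by ring
  rw [hfin, hF, hsub] at key
  linarith
end

section
/- Let H be a real inner product space, g₁,…,g_K ∈ H with K ≥ 2, a := min_{i≠j} ‖gᵢ - gⱼ‖, b := max_{i≠j} |‖gᵢ‖ - ‖gⱼ‖|, π ∈ Δ_{K-1}, and L := Σ_k π_k ‖g_k‖. If L > 0, then ‖Σ_k π_k g_k‖ ≤ L - ((a² - b²)/(4L)) · Σ_k π_k(1 - π_k). -/
theorem stmt2 {H : Type*} [NormedAddCommGroup H] [InnerProductSpace ℝ H]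
    {K : ℕ} (hK : 2 ≤ K) (g : Fin K → H)
    (hne : (Finset.univ.filter fun p : Fin K × Fin K => p.1 ≠ p.2).Nonempty)
    (a b : ℝ)
    (ha : a = (Finset.univ.filter fun p : Fin K × Fin K => p.1 ≠ p.2).inf' hne
        fun p => ‖g p.1 - g p.2‖)
    (hb : b = (Finset.univ.filter fun p : Fin K × Fin K => p.1 ≠ p.2).sup' hne
        fun p => |‖g p.1‖ - ‖g p.2‖|)
    (π : Fin K → ℝ) (hπ0 : ∀ k, 0 ≤ π k) (hπ1 : ∑ k, π k = 1)
    (L : ℝ) (hL : L = ∑ k, π k * ‖g k‖) (hLpos : 0 < L) :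
    ‖∑ k, π k • g k‖ ≤ L - ((a ^ 2 - b ^ 2) / (4 * L)) * ∑ k, π k * (1 - π k) := by
  classical
  set S : H := ∑ k, π k • g k with hS
  set T : ℝ := ∑ k, π k * (1 - π k) with hT
  set F : Fin K × Fin K → ℝ := fun p =>
    π p.1 * π p.2 * (‖g p.1‖ * ‖g p.2‖ - (inner ℝ (g p.1) (g p.2) : ℝ)) with hF
  -- L^2 as double sum
  have hL2 : L ^ 2 = ∑ p : Fin K × Fin K, (π p.1 * π p.2) * (‖g p.1‖ * ‖g p.2‖) := by
    rw [hL, sq, Finset.sum_mul_sum, Fintype.sum_prod_type]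
    apply Finset.sum_congr rfl; intros i _
    apply Finset.sum_congr rfl; intros j _
    ring
  have hS2 : ‖S‖ ^ 2 = ∑ p : Fin K × Fin K, (π p.1 * π p.2) * (inner ℝ (g p.1) (g p.2) : ℝ) := by
    rw [← real_inner_self_eq_norm_sq, hS, inner_sum, Fintype.sum_prod_type]
    apply Finset.sum_congr rfl; intros j _
    rw [sum_inner]
    apply Finset.sum_congr rfl; intros i _
    rw [real_inner_smul_left, real_inner_smul_right, real_inner_comm]
    ring
  have hE : L ^ 2 - ‖S‖ ^ 2 = ∑ p : Fin K × Fin K, F p := by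
    rw [hL2, hS2, ← Finset.sum_sub_distrib]
    apply Finset.sum_congr rfl; intros p _
    simp [hF]; ring
  -- diagonal vanishes
  have hfilter : ∑ p ∈ (Finset.univ.filter fun p : Fin K × Fin K => p.1 ≠ p.2), F p
      = ∑ p : Fin K × Fin K, F p := by
    apply Finset.sum_filter_of_ne
    intro p _ hFp
    intro hpe
    apply hFp
    simp only [hF, hpe]
    rw [real_inner_self_eq_norm_mul_norm]
    ring
  -- pairwise bound
  have hpair : ∀ p ∈ (Finset.univ.filter fun p : Fin K × Fin K => p.1 ≠ p.2),
      (a ^ 2 - b ^ 2) / 2 * (π p.1 * π p.2) ≤ F p := by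
    intro p hp
    have ha0 : 0 ≤ a := by
      rw [ha]
      exact Finset.le_inf' hne _ (fun q _ => norm_nonneg _)
    have hd : a ≤ ‖g p.1 - g p.2‖ := ha ▸ Finset.inf'_le _ hp
    have hbb : |‖g p.1‖ - ‖g p.2‖| ≤ b := hb ▸ Finset.le_sup' (fun q : Fin K × Fin K => |‖g q.1‖ - ‖g q.2‖|) hp
    have h1 : a ^ 2 ≤ ‖g p.1 - g p.2‖ ^ 2 := pow_le_pow_left₀ ha0 hd 2
    have h2 : (‖g p.1‖ - ‖g p.2‖) ^ 2 ≤ b ^ 2 := by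
      rw [← sq_abs]
      exact pow_le_pow_left₀ (abs_nonneg _) hbb 2
    have h3 : ‖g p.1 - g p.2‖ ^ 2 =
        ‖g p.1‖ ^ 2 - 2 * (inner ℝ (g p.1) (g p.2) : ℝ) + ‖g p.2‖ ^ 2 :=
      norm_sub_sq_real _ _
    have hterm : (a ^ 2 - b ^ 2) / 2 ≤ ‖g p.1‖ * ‖g p.2‖ - (inner ℝ (g p.1) (g p.2) : ℝ) := by
      nlinarith [h1, h2, h3]
    have hpp : 0 ≤ π p.1 * π p.2 := mul_nonneg (hπ0 _) (hπ0 _)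
    calc (a ^ 2 - b ^ 2) / 2 * (π p.1 * π p.2)
        = π p.1 * π p.2 * ((a ^ 2 - b ^ 2) / 2) := by ring
      _ ≤ π p.1 * π p.2 * (‖g p.1‖ * ‖g p.2‖ - (inner ℝ (g p.1) (g p.2) : ℝ)) :=
          mul_le_mul_of_nonneg_left hterm hpp
  -- sum of products off-diagonal equals T
  have hTsum : ∑ p ∈ (Finset.univ.filter fun p : Fin K × Fin K => p.1 ≠ p.2),
      π p.1 * π p.2 = T := by
    have hall : ∑ p : Fin K × Fin K, π p.1 * π p.2 = 1 := by
      rw [Fintype.sum_prod_type]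
      rw [← Finset.sum_mul_sum, hπ1]; ring
    have hdiag : ∑ p ∈ (Finset.univ.filter fun p : Fin K × Fin K => ¬ p.1 ≠ p.2),
        π p.1 * π p.2 = ∑ k, π k * π k := by
      rw [Finset.sum_filter, Fintype.sum_prod_type]
      simp [Finset.sum_ite_eq]
    have hsplit := Finset.sum_filter_add_sum_filter_not
      (Finset.univ : Finset (Fin K × Fin K)) (fun p => p.1 ≠ p.2)
      (fun p => π p.1 * π p.2)
    rw [hall] at hsplit
    have hTeq : T = 1 - ∑ k, π k * π k := by
      rw [hT]
      have : ∑ k, π k * (1 - π k) = (∑ k, π k) - ∑ k, π k * π k := by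
        rw [← Finset.sum_sub_distrib]
        apply Finset.sum_congr rfl; intros; ring
      rw [this, hπ1]
    rw [hTeq, ← hdiag]
    linarith [hsplit]
  -- key inequality
  have hkey : (a ^ 2 - b ^ 2) * T ≤ 2 * (L ^ 2 - ‖S‖ ^ 2) := by
    have h := Finset.sum_le_sum hpair
    rw [← Finset.mul_sum, hTsum, hfilter, ← hE] at h
    linarith
  -- finish
  have h4L : (0:ℝ) < 4 * L := by linarith
  rw [div_mul_eq_mul_div, le_sub_comm, div_le_iff₀ h4L]
  nlinarith [hkey, sq_nonneg (L - ‖S‖)]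
end

section
/- Let Γ be a K×K real symmetric positive semidefinite matrix with eigenvalues λ₁ ≥ ⋯ ≥ λ_K ≥ 0, and fix 0 ≤ s ≤ K-2. Suppose s of the vectors g₁,…,g_K in a real inner product space with Gram matrix Γ satisfy ‖g_{k_j}‖ ≤ δ for j = 1,…,s, and λ_{K-1-s}(Γ) ≥ 2(K-2)δ². Then max_{1≤k≤K} ‖g_k‖ ≥ (1/2)·√(λ_{K-1-s}(Γ)). -/
theorem stmt4 {H : Type*} [NormedAddCommGroup H] [InnerProductSpace ℝ H]
    {K : ℕ} (hK : 2 ≤ K) (g : Fin K → H)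
    (Γ : Matrix (Fin K) (Fin K) ℝ)
    (hg : ∀ i j, Γ i j = (inner ℝ (g i) (g j) : ℝ))
    (hΓ : Γ.IsHermitian)
    (μ : Fin K → ℝ) (hμa : Antitone μ)
    (hμe : ∃ σ : Equiv.Perm (Fin K), μ = hΓ.eigenvalues ∘ σ)
    (s : ℕ) (hs : s ≤ K - 2) (δ : ℝ)
    (T : Finset (Fin K)) (hT : T.card = s) (hδ : ∀ k ∈ T, ‖g k‖ ≤ δ)
    (hlam : 2 * ((K : ℝ) - 2) * δ ^ 2 ≤ μ ⟨K - 2 - s, by omega⟩) :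
    ∃ k : Fin K, (1 / 2) * Real.sqrt (μ ⟨K - 2 - s, by omega⟩) ≤ ‖g k‖ := by
  set n : Fin K := ⟨K - 2 - s, by omega⟩ with hn
  set lam := μ n with hlamdef
  -- Γ is positive semidefinite
  have hpsd : Γ.PosSemidef := by
    refine Matrix.PosSemidef.of_dotProduct_mulVec_nonneg hΓ fun x => ?_
    have hx : dotProduct (star x) (Γ.mulVec x)
        = (inner ℝ (∑ i, x i • g i) (∑ j, x j • g j) : ℝ) := by
      rw [inner_sum]
      simp only [dotProduct, Matrix.mulVec, Pi.star_apply, star_trivial,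
        real_inner_smul_right, sum_inner, real_inner_smul_left]
      rw [Finset.sum_comm]
      refine Finset.sum_congr rfl fun j _ => ?_
      rw [Finset.mul_sum, Finset.sum_congr rfl fun i _ => ?_]
      rw [hg]; ring
    rw [hx]
    exact real_inner_self_nonneg
  obtain ⟨σ, hσ⟩ := hμe
  have hμnn : ∀ i, 0 ≤ μ i := by
    intro i; rw [hσ]; exact hpsd.eigenvalues_nonneg _
  have hlam0 : 0 ≤ lam := hμnn n
  -- trace identity
  have htr : ∑ i, μ i = ∑ i, ‖g i‖ ^ 2 := by
    have h1 : ∑ i, μ i = ∑ i, hΓ.eigenvalues i := by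
      rw [hσ]; exact Equiv.sum_comp σ _
    have h2 : Γ.trace = ∑ i, hΓ.eigenvalues i := by
      simpa using hΓ.trace_eq_sum_eigenvalues
    have h3 : Γ.trace = ∑ i, ‖g i‖ ^ 2 := by
      rw [Matrix.trace]
      refine Finset.sum_congr rfl fun i _ => ?_
      rw [Matrix.diag_apply, hg, real_inner_self_eq_norm_sq]
    rw [h1, ← h2, h3]
  rcases eq_or_lt_of_le hlam0 with h0 | hpos
  · refine ⟨⟨0, by omega⟩, ?_⟩
    rw [← h0, Real.sqrt_zero, mul_zero]
    exact norm_nonneg _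
  by_contra hcon
  push_neg at hcon
  have hsq : ∀ k, ‖g k‖ ^ 2 < lam / 4 := by
    intro k
    have h1 : ‖g k‖ ^ 2 < ((1 / 2) * Real.sqrt lam) ^ 2 := by
      apply pow_lt_pow_left₀ (hcon k) (norm_nonneg _) two_ne_zero
    calc ‖g k‖ ^ 2 < ((1 / 2) * Real.sqrt lam) ^ 2 := h1
      _ = lam / 4 := by rw [mul_pow, Real.sq_sqrt hlam0]; ring
  -- lower bound on the trace
  have hlow : ((K - 1 - s : ℕ) : ℝ) * lam ≤ ∑ i, μ i := by
    have hsub : ∑ i ∈ Finset.Iic n, μ i ≤ ∑ i, μ i :=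
      Finset.sum_le_sum_of_subset_of_nonneg (Finset.subset_univ _)
        (fun i _ _ => hμnn i)
    have hcard : (Finset.Iic n).card = K - 1 - s := by
      rw [Fin.card_Iic]; simp only [hn]; omega
    have : ((K - 1 - s : ℕ) : ℝ) * lam ≤ ∑ i ∈ Finset.Iic n, μ i := by
      rw [← hcard]
      calc ((Finset.Iic n).card : ℝ) * lam = ∑ _i ∈ Finset.Iic n, lam := by
            rw [Finset.sum_const, nsmul_eq_mul]
        _ ≤ ∑ i ∈ Finset.Iic n, μ i :=
            Finset.sum_le_sum fun i hi => hμa (Finset.mem_Iic.mp hi)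
    linarith
  -- upper bound on the trace
  have hTc : Tᶜ.card = K - s := by
    rw [Finset.card_compl, hT]; simp
  have hTcne : Tᶜ.Nonempty := by
    rw [← Finset.card_pos, hTc]; omega
  have hup1 : ∑ i ∈ T, ‖g i‖ ^ 2 ≤ (s : ℝ) * δ ^ 2 := by
    calc ∑ i ∈ T, ‖g i‖ ^ 2 ≤ ∑ _i ∈ T, δ ^ 2 :=
          Finset.sum_le_sum fun i hi =>
            pow_le_pow_left₀ (norm_nonneg _) (hδ i hi) 2
      _ = (s : ℝ) * δ ^ 2 := by rw [Finset.sum_const, nsmul_eq_mul, hT]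
  have hup2 : ∑ i ∈ Tᶜ, ‖g i‖ ^ 2 < ((K - s : ℕ) : ℝ) * (lam / 4) := by
    calc ∑ i ∈ Tᶜ, ‖g i‖ ^ 2 < ∑ _i ∈ Tᶜ, lam / 4 :=
          Finset.sum_lt_sum_of_nonempty hTcne fun i _ => hsq i
      _ = ((K - s : ℕ) : ℝ) * (lam / 4) := by
          rw [Finset.sum_const, nsmul_eq_mul, hTc]
  have hsplit : ∑ i ∈ T, ‖g i‖ ^ 2 + ∑ i ∈ Tᶜ, ‖g i‖ ^ 2 = ∑ i, ‖g i‖ ^ 2 :=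
    Finset.sum_add_sum_compl T _
  -- arithmetic contradiction
  have hsd : (s : ℝ) * δ ^ 2 ≤ lam / 2 := by
    have h1 : (s : ℝ) ≤ (K : ℝ) - 2 := by
      have : (s : ℝ) ≤ ((K - 2 : ℕ) : ℝ) := Nat.cast_le.mpr hs
      have h2 : ((K - 2 : ℕ) : ℝ) = (K : ℝ) - 2 := by
        push_cast [Nat.cast_sub hK]; ring
      linarith
    nlinarith [sq_nonneg δ]
  have hc1 : ((K - 1 - s : ℕ) : ℝ) = (K : ℝ) - 1 - s := by
    rw [Nat.sub_sub, Nat.cast_sub (by omega : 1 + s ≤ K)]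
    push_cast; ring
  have hc2 : ((K - s : ℕ) : ℝ) = (K : ℝ) - s := by
    rw [Nat.cast_sub (by omega : s ≤ K)]
  have hKs : (2 : ℝ) ≤ (K : ℝ) - s := by
    rw [← hc2]
    exact_mod_cast (by omega : 2 ≤ K - s)
  rw [hc1] at hlow
  rw [hc2] at hup2
  nlinarith [hlow, hup1, hup2, hsplit, htr, hsd, hpos]
end

section
/- Let H be a real inner product space, g₁,…,g_K ∈ H, and Γ̃ the Gram matrix of the centered vectors g̃_k = g_k - (1/K)Σ_ℓ g_ℓ. Then for any π, π̃ in the probability simplex Δ_{K-1}, √(λ_{K-1}(Γ̃)) · ‖π - π̃‖₂ ≤ ‖Σ_k π_k g_k - Σ_k π̃_k g_k‖. -/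
theorem aux_dp_sum {n ι : Type*} [Fintype n] (s : Finset ι) (v : n → ℝ) (f : ι → n → ℝ) :
    dotProduct v (∑ j ∈ s, f j) = ∑ j ∈ s, dotProduct v (f j) := by
  simp only [dotProduct, Finset.sum_apply, Finset.mul_sum]
  exact Finset.sum_comm

open Matrix in
theorem aux_mv_sum {n ι : Type*} [Fintype n] [DecidableEq n] (s : Finset ι)
    (A : Matrix n n ℝ) (f : ι → n → ℝ) :
    A *ᵥ (∑ j ∈ s, f j) = ∑ j ∈ s, A *ᵥ f j := by
  rw [← A.mulVecLin_apply, map_sum]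
  simp [Matrix.mulVecLin_apply]

open Finset Matrix

theorem stmt10 {H : Type*} [NormedAddCommGroup H] [InnerProductSpace ℝ H]
    {K : ℕ} (hK : 0 < K) (g : Fin K → H)
    (gt : Fin K → H) (hgt : ∀ k, gt k = g k - (K : ℝ)⁻¹ • ∑ ℓ, g ℓ)
    (Γt : Matrix (Fin K) (Fin K) ℝ)
    (hΓt : ∀ i j, Γt i j = (inner ℝ (gt i) (gt j) : ℝ))
    (hH : Γt.IsHermitian)
    (μ : Fin K → ℝ) (hμa : Antitone μ)
    (hμe : ∃ σ : Equiv.Perm (Fin K), μ = hH.eigenvalues ∘ σ)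
    (π πt : Fin K → ℝ)
    (hπ0 : ∀ k, 0 ≤ π k) (hπ1 : ∑ k, π k = 1)
    (hπt0 : ∀ k, 0 ≤ πt k) (hπt1 : ∑ k, πt k = 1) :
    Real.sqrt (μ ⟨K - 2, by omega⟩) * Real.sqrt (∑ k, (π k - πt k) ^ 2)
      ≤ ‖(∑ k, π k • g k) - ∑ k, πt k • g k‖ := by
  classical
  set v : Fin K → ℝ := fun k => π k - πt k with hv
  have hvsum : ∑ k, v k = 0 := by
    simp only [hv, Finset.sum_sub_distrib, hπ1, hπt1, sub_self]
  -- sum of centered vectors is zero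
  have hgtsum : (∑ j, gt j) = 0 := by
    simp only [hgt, Finset.sum_sub_distrib, Finset.sum_const, Finset.card_univ,
      Fintype.card_fin]
    rw [← Nat.cast_smul_eq_nsmul ℝ, smul_smul,
      mul_inv_cancel₀ (by exact_mod_cast hK.ne' : (K : ℝ) ≠ 0), one_smul, sub_self]
  -- quadratic form identity
  have hquad : ∀ x : Fin K → ℝ, dotProduct x (Γt *ᵥ x)
      = (inner ℝ (∑ i, x i • gt i) (∑ i, x i • gt i) : ℝ) := by
    intro x
    simp only [dotProduct, Matrix.mulVec, sum_inner, inner_sum,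
      real_inner_smul_left, real_inner_smul_right, hΓt, Finset.mul_sum]
    exact Finset.sum_congr rfl fun i _ => Finset.sum_congr rfl fun j _ => by
      rw [real_inner_comm]; ring
  have hpsd : Γt.PosSemidef := by
    refine posSemidef_iff_dotProduct_mulVec.mpr ⟨hH, fun x => ?_⟩
    have : star x = x := rfl
    rw [this, hquad x]
    exact real_inner_self_nonneg
  -- the target vector
  set w : H := ∑ k, v k • g k with hw
  have hw1 : (∑ k, π k • g k) - ∑ k, πt k • g k = w := by
    rw [hw, ← Finset.sum_sub_distrib]
    exact Finset.sum_congr rfl fun k _ => by rw [hv, sub_smul]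
  have hw2 : w = ∑ k, v k • gt k := by
    simp only [hgt, smul_sub, Finset.sum_sub_distrib, ← Finset.sum_smul, hvsum,
      zero_smul, sub_zero, hw]
  -- norm squared of w equals quadratic form
  have hQw : dotProduct v (Γt *ᵥ v) = ‖w‖ ^ 2 := by
    rw [hquad v, ← hw2, real_inner_self_eq_norm_sq]
  -- the all-ones vector
  set e : EuclideanSpace ℝ (Fin K) := WithLp.toLp 2 (fun _ => (1 : ℝ)) with he
  have hΓe : Γt *ᵥ (e : Fin K → ℝ) = 0 := by
    funext i
    have : (Γt *ᵥ (e : Fin K → ℝ)) i = (inner ℝ (gt i) (∑ j, gt j) : ℝ) := by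
      simp only [Matrix.mulVec, dotProduct, inner_sum, he, mul_one, hΓt]
    rw [this, hgtsum, inner_zero_right]; rfl
  -- symmetry of Γt
  have hsym : ∀ x y : Fin K → ℝ,
      dotProduct (Γt *ᵥ x) y = dotProduct x (Γt *ᵥ y) := by
    intro x y
    rw [dotProduct_comm, dotProduct_mulVec, ← Matrix.mulVec_transpose,
      show Γtᵀ = Γt from hH, dotProduct_comm]
  -- eigen setup
  set b := hH.eigenvectorBasis with hb
  set lam := hH.eigenvalues with hlam
  have hlam0 : ∀ i, 0 ≤ lam i := fun i => hpsd.eigenvalues_nonneg i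
  set V : EuclideanSpace ℝ (Fin K) := WithLp.toLp 2 v with hV
  set c : Fin K → ℝ := fun j => dotProduct (b j : Fin K → ℝ) v with hc
  have hdot_inner : ∀ (x y : EuclideanSpace ℝ (Fin K)),
      (inner ℝ x y : ℝ) = dotProduct (x : Fin K → ℝ) (y : Fin K → ℝ) := by
    intro x y
    simp only [PiLp.inner_apply, RCLike.inner_apply, starRingEnd_apply, star_trivial]
    unfold dotProduct
    exact Finset.sum_congr rfl fun i _ => mul_comm _ _
  have hortho : ∀ i j, dotProduct (b i : Fin K → ℝ) (b j : Fin K → ℝ)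
      = if i = j then 1 else 0 := by
    intro i j
    rw [← hdot_inner]
    exact orthonormal_iff_ite.mp b.orthonormal i j
  -- representation of v in eigenbasis
  have hrepr : v = ∑ j, c j • (b j : Fin K → ℝ) := by
    have := b.sum_repr' V
    have h2 : ∀ j, (inner ℝ (b j) V : ℝ) = c j := fun j => by
      rw [hdot_inner]
    calc v = (∑ j, (inner ℝ (b j) V : ℝ) • b j : EuclideanSpace ℝ (Fin K)) := (congrArg WithLp.ofLp this).symm
    _ = ∑ j, c j • (b j : Fin K → ℝ) := by
        simp only [h2, WithLp.ofLp_sum, WithLp.ofLp_smul]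
  -- mulVec on eigenvectors
  have hmul : Γt *ᵥ v = ∑ j, (c j * lam j) • (b j : Fin K → ℝ) := by
    conv_lhs => rw [hrepr]
    rw [aux_mv_sum]
    refine Finset.sum_congr rfl fun j _ => ?_
    rw [Matrix.mulVec_smul,
      show Γt *ᵥ (b j : Fin K → ℝ) = lam j • (b j : Fin K → ℝ) from
        hH.mulVec_eigenvectorBasis j,
      smul_smul, mul_comm]
  have hvb : ∀ j, dotProduct v (b j : Fin K → ℝ) = c j := by
    intro j; rw [dotProduct_comm]
  have hQ : dotProduct v (Γt *ᵥ v) = ∑ j, lam j * c j ^ 2 := by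
    rw [hmul, aux_dp_sum]
    exact Finset.sum_congr rfl fun j _ => by
      rw [dotProduct_smul, smul_eq_mul, hvb j]; ring
  have hN : ∑ k, (π k - πt k) ^ 2 = ∑ j, c j ^ 2 := by
    have h1 : ∑ k, (π k - πt k) ^ 2 = dotProduct v v := by
      simp only [dotProduct, hv, sq]
    rw [h1]
    nth_rewrite 2 [hrepr]
    rw [aux_dp_sum]
    exact Finset.sum_congr rfl fun j _ => by
      rw [dotProduct_smul, smul_eq_mul, hvb j, sq]
  -- main case split
  set m : ℝ := μ ⟨K - 2, by omega⟩ with hm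
  by_cases hm0 : m ≤ 0
  · have : Real.sqrt m = 0 := Real.sqrt_eq_zero'.mpr hm0
    rw [hw1, this, zero_mul]
    exact norm_nonneg w
  push_neg at hm0
  -- at most one eigenvalue below m
  obtain ⟨σ, hσ⟩ := hμe
  have huniq : ∀ i j, lam i < m → lam j < m → i = j := by
    intro i j hi hj
    have hval : ∀ i : Fin K, lam i < m → (σ.symm i : ℕ) = K - 1 := by
      intro i hi
      have h1 : μ (σ.symm i) = lam i := by rw [hσ]; simp
      have h2 : μ (σ.symm i) < m := h1 ▸ hi
      have h3 : ¬ ((σ.symm i : Fin K) ≤ ⟨K - 2, by omega⟩) := by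
        intro hle
        exact absurd (hμa hle) (not_le.mpr h2)
      have h4 : K - 2 < (σ.symm i : ℕ) := by
        rcases lt_or_ge (K - 2 : ℕ) (σ.symm i : ℕ) with h | h
        · exact h
        · exact absurd (by exact h : (σ.symm i : Fin K) ≤ ⟨K - 2, by omega⟩) h3
      omega
    have := hval i hi
    have := hval j hj
    have : σ.symm i = σ.symm j := Fin.ext (by omega)
    exact σ.symm.injective this
  -- coordinates of v on small eigenvalues vanish
  have hkey : ∀ j, lam j < m → c j = 0 := by
    intro i₀ h₀
    have hge : ∀ j, j ≠ i₀ → m ≤ lam j := by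
      intro j hj
      by_contra hlt
      exact hj (huniq j i₀ (not_le.mp hlt) h₀)
    set d : Fin K → ℝ := fun j => dotProduct (b j : Fin K → ℝ) (e : Fin K → ℝ) with hd
    have hde : ∀ j, j ≠ i₀ → d j = 0 := by
      intro j hj
      have h1 : lam j * d j = 0 := by
        have : dotProduct (Γt *ᵥ (b j : Fin K → ℝ)) (e : Fin K → ℝ) = 0 := by
          rw [hsym, hΓe, dotProduct_zero]
        rw [show Γt *ᵥ (b j : Fin K → ℝ) = lam j • (b j : Fin K → ℝ) from
          hH.mulVec_eigenvectorBasis j] at this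
        rw [← this, smul_dotProduct, smul_eq_mul]
      have h2 : lam j ≠ 0 := ne_of_gt (lt_of_lt_of_le hm0 (hge j hj))
      exact (mul_eq_zero.mp h1).resolve_left h2
    -- e = d i₀ • b i₀
    have hrepre : (e : Fin K → ℝ) = d i₀ • (b i₀ : Fin K → ℝ) := by
      have h2 : ∀ j, (inner ℝ (b j) e : ℝ) = d j := fun j => by rw [hdot_inner]
      calc (e : Fin K → ℝ) = (∑ j, (inner ℝ (b j) e : ℝ) • b j : EuclideanSpace ℝ (Fin K)) :=
            congrArg WithLp.ofLp (b.sum_repr' e).symm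
        _ = ∑ j, d j • (b j : Fin K → ℝ) := by simp only [h2, WithLp.ofLp_sum, WithLp.ofLp_smul]
        _ = d i₀ • (b i₀ : Fin K → ℝ) := by
            rw [Finset.sum_eq_single i₀ (fun j _ hj => by rw [hde j hj, zero_smul])
              (fun h => absurd (Finset.mem_univ i₀) h)]
    have hdne : d i₀ ≠ 0 := by
      intro h0
      have : (e : Fin K → ℝ) = 0 := by rw [hrepre, h0, zero_smul]
      have := congrFun this ⟨0, hK⟩
      simp [he] at this
    have hve : dotProduct v (e : Fin K → ℝ) = 0 := by
      simp only [dotProduct, he, mul_one]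
      exact hvsum
    rw [hrepre, dotProduct_smul, smul_eq_mul, hvb] at hve
    exact (mul_eq_zero.mp hve).resolve_left hdne
  -- final inequality
  have hmain : m * ∑ j, c j ^ 2 ≤ ∑ j, lam j * c j ^ 2 := by
    rw [Finset.mul_sum]
    refine Finset.sum_le_sum fun j _ => ?_
    by_cases hj : lam j < m
    · rw [hkey j hj]; simp
    · exact mul_le_mul_of_nonneg_right (not_lt.mp hj) (sq_nonneg _)
  rw [hw1, ← Real.sqrt_mul (le_of_lt hm0), ← Real.sqrt_sq (norm_nonneg w)]
  apply Real.sqrt_le_sqrt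
  rw [hN, ← hQw, hQ]
  exact hmain
end
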